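/- Suppose f : ℝ^n → ℝ is differentiable with L-Lipschitz gradient and the iterates satisfy the inclusion κ(α∇f(P_k) + p_{k+1} - p_k) + P_{k+1} - P_k = 0 with p_k ∈ ∂R(P_k) for a convex function R, κ > 0, and 0 < α < 2/(κL). Then f(P_{k+1}) + ⟨p_{k+1} - p_k, P_{k+1} - P_k⟩/α + (1/(κα) - L/2)‖P_{k+1} - P_k‖² ≤ f(P_k). -/

import Mathlib

open scoped RealInnerProductSpace

/-- Sufficient descent for one step of the iteration
`κ(α∇f(P_k) + p_{k+1} - p_k) + P_{k+1} - P_k = 0` with `p_k ∈ ∂R(P_k)`,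
when `∇f` is `L`-Lipschitz and `0 < α < 2/(κL)`. -/
theorem sufficient_descent_step {n : ℕ}
    (f : EuclideanSpace ℝ (Fin n) → ℝ)
    (gradf : EuclideanSpace ℝ (Fin n) → EuclideanSpace ℝ (Fin n))
    (hgrad : ∀ x, HasGradientAt f (gradf x) x)
    (L : ℝ) (hL : 0 < L)
    (hlip : ∀ x y, ‖gradf x - gradf y‖ ≤ L * ‖x - y‖)
    (hdesc : ∀ x y, f y ≤ f x + ⟪gradf x, y - x⟫ + (L / 2) * ‖y - x‖ ^ 2)
    (R : EuclideanSpace ℝ (Fin n) → ℝ)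
    (hR : ConvexOn ℝ Set.univ R)
    (κ α : ℝ) (hκ : 0 < κ) (hα : 0 < α) (hακ : α < 2 / (κ * L))
    (Pk Pk1 pk pk1 : EuclideanSpace ℝ (Fin n))
    (hpk : ∀ U, R Pk + ⟪pk, U - Pk⟫ ≤ R U)
    (hpk1 : ∀ U, R Pk1 + ⟪pk1, U - Pk1⟫ ≤ R U)
    (hiter : κ • (α • gradf Pk + pk1 - pk) + (Pk1 - Pk) = 0) :
    f Pk1 + ⟪pk1 - pk, Pk1 - Pk⟫ / α + (1 / (κ * α) - L / 2) * ‖Pk1 - Pk‖ ^ 2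
      ≤ f Pk := by
  have hv : α • gradf Pk + pk1 - pk = (-(κ⁻¹)) • (Pk1 - Pk) := by
    have h : κ • (α • gradf Pk + pk1 - pk) = -(Pk1 - Pk) := by
      have := hiter
      rw [add_eq_zero_iff_eq_neg] at this
      exact this
    have := congrArg (fun z => κ⁻¹ • z) h
    simp only [smul_smul, inv_mul_cancel₀ hκ.ne', one_smul] at this
    rw [this, neg_smul, smul_neg]
  have hinner : α * ⟪gradf Pk, Pk1 - Pk⟫ + ⟪pk1 - pk, Pk1 - Pk⟫
      = -(κ⁻¹) * ‖Pk1 - Pk‖ ^ 2 := by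
    have h2 := congrArg (fun z => ⟪z, Pk1 - Pk⟫) hv
    rw [inner_sub_left, inner_add_left, real_inner_smul_left, real_inner_smul_left,
      real_inner_self_eq_norm_sq] at h2
    rw [inner_sub_left]
    rw [sq]
    linarith [h2]
  have hd := hdesc Pk Pk1
  have hg : ⟪gradf Pk, Pk1 - Pk⟫
      = (-(κ⁻¹) * ‖Pk1 - Pk‖ ^ 2 - ⟪pk1 - pk, Pk1 - Pk⟫) / α := by
    rw [eq_div_iff hα.ne']
    linarith [hinner]
  rw [hg] at hd
  have e : (-(κ⁻¹) * ‖Pk1 - Pk‖ ^ 2 - ⟪pk1 - pk, Pk1 - Pk⟫) / α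
      = -((1/(κ*α)) * ‖Pk1 - Pk‖ ^ 2) - ⟪pk1 - pk, Pk1 - Pk⟫ / α := by
    field_simp
  rw [e] at hd
  linarith [hd]
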